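/- For any graph G and any integer k ≥ 2, the dual DP color function satisfies P*_DP(G, k) ≥ 2. -/

import Mathlib

open scoped Classical

/-- Number of proper `k`-colorings of `G` (the chromatic polynomial evaluated at `k`). -/
noncomputable def properCount {V : Type*} (G : SimpleGraph V) (k : ℕ) : ℕ :=
  Nat.card {f : V → Fin k // ∀ u v, G.Adj u v → f u ≠ f v}

/-- Number of proper `L`-colorings of `G` for a list assignment `L`. -/
noncomputable def listCount {V : Type*} (G : SimpleGraph V) (L : V → Finset ℕ) : ℕ :=
  Nat.card {f : V → ℕ // (∀ v, f v ∈ L v) ∧ ∀ u v, G.Adj u v → f u ≠ f v}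

/-- The list color function `P_ℓ(G, k)`. -/
noncomputable def listColorFn {V : Type*} (G : SimpleGraph V) (k : ℕ) : ℕ :=
  sInf {m | ∃ L : V → Finset ℕ, (∀ v, (L v).card = k) ∧ m = listCount G L}

/-- `H` (on vertex set `V × Fin k`, with `L v = {v} × Fin k`) is a `k`-fold DP-cover of `G`:
each part is a clique, cross-edges only between parts of adjacent vertices, and the
cross-edges between parts of adjacent vertices form a matching. -/
def IsDPCover {V : Type*} (G : SimpleGraph V) (k : ℕ) (H : SimpleGraph (V × Fin k)) : Prop :=
  (∀ v : V, ∀ i j : Fin k, i ≠ j → H.Adj (v, i) (v, j)) ∧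
  (∀ u v : V, ∀ i j : Fin k, H.Adj (u, i) (v, j) → u = v ∨ G.Adj u v) ∧
  (∀ u v : V, G.Adj u v →
    (∀ i j j' : Fin k, H.Adj (u, i) (v, j) → H.Adj (u, i) (v, j') → j = j') ∧
    (∀ i i' j : Fin k, H.Adj (u, i) (v, j) → H.Adj (u, i') (v, j) → i = i'))

/-- A full `k`-fold DP-cover: the matching between the parts of adjacent vertices is perfect. -/
def IsFullDPCover {V : Type*} (G : SimpleGraph V) (k : ℕ) (H : SimpleGraph (V × Fin k)) : Prop :=
  IsDPCover G k H ∧ ∀ u v : V, G.Adj u v → ∀ i : Fin k, ∃! j : Fin k, H.Adj (u, i) (v, j)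

/-- The number of `H`-colorings of `G` (independent sets of `H` with one vertex in each part,
encoded as functions `V → Fin k`). -/
noncomputable def dpCount {V : Type*} (k : ℕ) (H : SimpleGraph (V × Fin k)) : ℕ :=
  Nat.card {f : V → Fin k // ∀ u v : V, u ≠ v → ¬ H.Adj (u, f u) (v, f v)}

/-- The DP color function `P_DP(G, k)`. -/
noncomputable def dpColorFn {V : Type*} (G : SimpleGraph V) (k : ℕ) : ℕ :=
  sInf {m | ∃ H : SimpleGraph (V × Fin k), IsDPCover G k H ∧ m = dpCount k H}

/-- The dual DP color function `P*_DP(G, k)`. -/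
noncomputable def dualDPColorFn {V : Type*} (G : SimpleGraph V) (k : ℕ) : ℕ :=
  sSup {m | ∃ H : SimpleGraph (V × Fin k), IsFullDPCover G k H ∧ m = dpCount k H}

theorem stmt4 {V : Type*} [Fintype V] [Nonempty V] (G : SimpleGraph V) (k : ℕ) (hk : 2 ≤ k) :
    2 ≤ dualDPColorFn G k := by
  set a : Fin k := ⟨0, by omega⟩ with ha
  set b : Fin k := ⟨1, by omega⟩ with hb
  have hab : a ≠ b := by simp [ha, hb, Fin.ext_iff]
  set σ : Fin k ≃ Fin k := Equiv.swap a b with hσ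
  have hσa : σ a = b := Equiv.swap_apply_left a b
  have hσb : σ b = a := Equiv.swap_apply_right a b
  have hσσ : ∀ i, σ (σ i) = i := fun i => Equiv.swap_apply_self a b i
  set H : SimpleGraph (V × Fin k) :=
    { Adj := fun x y => (x.1 = y.1 ∧ x.2 ≠ y.2) ∨ (G.Adj x.1 y.1 ∧ y.2 = σ x.2)
      symm := by
        constructor
        rintro ⟨u, i⟩ ⟨v, j⟩ (⟨h1, h2⟩ | ⟨h1, h2⟩)
        · exact Or.inl ⟨h1.symm, h2.symm⟩
        · dsimp only at h2 ⊢
          exact Or.inr ⟨h1.symm, by rw [h2, hσσ]⟩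
      loopless := by
        constructor
        rintro ⟨u, i⟩ (⟨h1, h2⟩ | ⟨h1, h2⟩)
        · exact h2 rfl
        · exact G.irrefl h1 } with hH
  have hcover : IsFullDPCover G k H := by
    refine ⟨⟨fun v i j hij => Or.inl ⟨rfl, hij⟩, ?_, ?_⟩, ?_⟩
    · rintro u v i j (⟨h1, _⟩ | ⟨h1, _⟩)
      · exact Or.inl h1
      · exact Or.inr h1
    · intro u v huv
      constructor
      · rintro i j j' (⟨h1, _⟩ | ⟨_, h2⟩) (⟨h1', _⟩ | ⟨_, h2'⟩)
        · exact absurd h1 huv.ne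
        · exact absurd h1 huv.ne
        · exact absurd h1' huv.ne
        · dsimp only at h2 h2'; rw [h2, h2']
      · rintro i i' j (⟨h1, _⟩ | ⟨_, h2⟩) (⟨h1', _⟩ | ⟨_, h2'⟩)
        · exact absurd h1 huv.ne
        · exact absurd h1 huv.ne
        · exact absurd h1' huv.ne
        · exact σ.injective (h2 ▸ h2'.symm ▸ rfl)
    · intro u v huv i
      refine ⟨σ i, Or.inr ⟨huv, rfl⟩, ?_⟩
      rintro j (⟨h1, _⟩ | ⟨_, h2⟩)
      · exact absurd h1 huv.ne
      · exact h2
  have hmem : dpCount k H ∈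
      {m | ∃ H : SimpleGraph (V × Fin k), IsFullDPCover G k H ∧ m = dpCount k H} :=
    ⟨H, hcover, rfl⟩
  have hbdd : BddAbove {m | ∃ H : SimpleGraph (V × Fin k), IsFullDPCover G k H ∧ m = dpCount k H} := by
    refine ⟨Nat.card (V → Fin k), ?_⟩
    rintro m ⟨H', _, rfl⟩
    exact Nat.card_le_card_of_injective Subtype.val Subtype.val_injective
  have hgood : ∀ c : Fin k, σ c ≠ c →
      ∀ u v : V, u ≠ v → ¬ H.Adj (u, c) (v, c) := by
    intro c hc u v huv
    rintro (⟨h1, h2⟩ | ⟨_, h2⟩)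
    · exact h2 rfl
    · exact hc h2.symm
  have hσan : σ a ≠ a := by rw [hσa]; exact hab.symm
  have hσbn : σ b ≠ b := by rw [hσb]; exact hab
  have h2 : 2 ≤ dpCount k H := by
    have : Nontrivial {f : V → Fin k // ∀ u v : V, u ≠ v → ¬ H.Adj (u, f u) (v, f v)} := by
      refine ⟨⟨fun _ => a, hgood a hσan⟩, ⟨fun _ => b, hgood b hσbn⟩, ?_⟩
      intro h
      have := congrFun (congrArg Subtype.val h) Classical.ofNonempty
      exact hab this
    have hfin : Finite {f : V → Fin k // ∀ u v : V, u ≠ v → ¬ H.Adj (u, f u) (v, f v)} :=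
      Subtype.finite
    rw [dpCount]
    exact Finite.one_lt_card_iff_nontrivial.mpr this
  exact le_trans h2 (le_csSup hbdd hmem)
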